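/- Without assumption (A2), the first Dirichlet eigenvalue can fail to be simple: in dimension N = 1 with weights ω(±2) = 1 and ω(α) = 0 otherwise, and Ω = (−2,3) (grid points −1, 0, 1, 2 with h = 1), the associated 4×4 matrix M with diagonal 2 and entries −1 at positions connecting points at distance 2 has eigenvalue 1 with multiplicity 2, with eigenvectors (1,0,1,0) and (0,1,0,1) that are not strictly positive. -/

import Mathlib

open Matrix

/-- The matrix of `-L_h` for the weights `ω(±2) = 1` on `Ω = (-2,3)` with `h = 1`. -/
def exampleM : Matrix (Fin 4) (Fin 4) ℝ :=
  !![2, 0, -1, 0; 0, 2, 0, -1; -1, 0, 2, 0; 0, -1, 0, 2]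

lemma det_example (μ : ℝ) :
    ((algebraMap ℝ (Matrix (Fin 4) (Fin 4) ℝ)) μ - exampleM).det
      = (μ - 1)^2 * (μ - 3)^2 := by
  have h : (algebraMap ℝ (Matrix (Fin 4) (Fin 4) ℝ)) μ - exampleM =
      !![μ-2, 0, 1, 0; 0, μ-2, 0, 1; 1, 0, μ-2, 0; 0, 1, 0, μ-2] := by
    ext i j
    simp [exampleM, Matrix.algebraMap_matrix_apply]
    fin_cases i <;> fin_cases j <;> simp
  rw [h]; simp [Matrix.det_succ_row_zero, Fin.sum_univ_succ, Fin.succAbove]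
  ring

lemma spec_iff (μ : ℝ) : μ ∈ spectrum ℝ exampleM ↔ (μ - 1)^2 * (μ - 3)^2 = 0 := by
  rw [spectrum.mem_iff, Matrix.isUnit_iff_isUnit_det, isUnit_iff_ne_zero, not_ne_iff,
    det_example]

/-- Without assumption (A2) the first eigenvalue need not be simple: for the matrix above,
`(1,0,1,0)` and `(0,1,0,1)` are linearly independent eigenvectors for the eigenvalue `1`,
neither of which is strictly positive, and `1` is the smallest eigenvalue of `M`. -/
theorem stmt6 :
    exampleM.mulVec ![1, 0, 1, 0] = ![1, 0, 1, 0] ∧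
    exampleM.mulVec ![0, 1, 0, 1] = ![0, 1, 0, 1] ∧
    LinearIndependent ℝ ![(![1, 0, 1, 0] : Fin 4 → ℝ), ![0, 1, 0, 1]] ∧
    (¬ ∀ i, 0 < (![1, 0, 1, 0] : Fin 4 → ℝ) i) ∧
    (¬ ∀ i, 0 < (![0, 1, 0, 1] : Fin 4 → ℝ) i) ∧
    (1 : ℝ) ∈ spectrum ℝ exampleM ∧
    (3 : ℝ) ∈ spectrum ℝ exampleM ∧
    (∀ μ ∈ spectrum ℝ exampleM, (1 : ℝ) ≤ μ) := by
  refine ⟨?_, ?_, ?_, ?_, ?_, ?_, ?_, ?_⟩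
  · ext i; fin_cases i <;> simp [exampleM, Matrix.mulVec, dotProduct, Fin.sum_univ_four] <;> norm_num
  · ext i; fin_cases i <;> simp [exampleM, Matrix.mulVec, dotProduct, Fin.sum_univ_four] <;> norm_num
  · rw [LinearIndependent.pair_iff]
    intro s t h
    have h0 := congrFun h 0
    have h1 := congrFun h 1
    simp at h0 h1
    exact ⟨h0, h1⟩
  · intro h; have := h 1; simp at this
  · intro h; have := h 0; simp at this
  · rw [spec_iff]; norm_num
  · rw [spec_iff]; norm_num
  · intro μ hμ
    rw [spec_iff, mul_eq_zero, pow_eq_zero_iff (by norm_num),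
      pow_eq_zero_iff (by norm_num), sub_eq_zero, sub_eq_zero] at hμ
    rcases hμ with h | h <;> simp [h]
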